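/- Fix $0<p<1/2$ and $n$. If the Courtade–Kumar conjecture holds for all balanced Boolean functions on $\{0,1\}^n$ at noise level $p$ (i.e., $I(f(Y);X)\leq 1-h(p)$ for every balanced $f$), then the symmetrized Li–Médard conjecture holds: $N^{\mathsf{sym}}_\alpha(f)\leq N^{\mathsf{sym}}_\alpha(f_0)$ for every balanced $f$ and every $\alpha\in[1,2]$. -/

import Mathlib

open Finset Real Filter
open Topology

/-- The noise operator `T_p` applied to a Boolean function on the Hamming cube. -/
noncomputable def Tp (n : ℕ) (p : ℝ) (f : (Fin n → Bool) → Bool) (x : Fin n → Bool) : ℝ :=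
  ∑ y : Fin n → Bool,
    p ^ hammingDist x y * (1 - p) ^ (n - hammingDist x y) * (if f y then 1 else 0)

/-- A Boolean function is balanced if it takes the value 1 exactly half the time. -/
def IsBalanced (n : ℕ) (f : (Fin n → Bool) → Bool) : Prop :=
  ∑ y : Fin n → Bool, (if f y then (1 : ℝ) else 0) = 2 ^ n / 2

/-- Dictatorship function on coordinate `i`. -/
def dict (n : ℕ) (i : Fin n) : (Fin n → Bool) → Bool := fun y => y i

/-- `N_α(f) = ∑_x (T_p f x)^α` (real power). -/
noncomputable def Nal (n : ℕ) (p : ℝ) (f : (Fin n → Bool) → Bool) (α : ℝ) : ℝ :=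
  ∑ x : Fin n → Bool, Tp n p f x ^ α

/-- Symmetrized version `N^sym_α(f) = ∑_x (T_p f x)^α + (1 - T_p f x)^α`. -/
noncomputable def Nsym (n : ℕ) (p : ℝ) (f : (Fin n → Bool) → Bool) (α : ℝ) : ℝ :=
  ∑ x : Fin n → Bool, (Tp n p f x ^ α + (1 - Tp n p f x) ^ α)

/-- Binary entropy function, in bits. -/
noncomputable def binEnt (t : ℝ) : ℝ := -(t * Real.logb 2 t) - (1 - t) * Real.logb 2 (1 - t)

/-- Mutual information `I(f(Y); X)` for a balanced Boolean function `f`,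
with `X` uniform on the cube and `Y` the output of a BSC(p) on input `X`. -/
noncomputable def MI (n : ℕ) (p : ℝ) (f : (Fin n → Bool) → Bool) : ℝ :=
  1 - ((2 : ℝ) ^ n)⁻¹ * ∑ x : Fin n → Bool, binEnt (Tp n p f x)


namespace CKLM

variable (n : ℕ) (p : ℝ)

def F (f : (Fin n → Bool) → Bool) (y : Fin n → Bool) : ℝ := if f y then 1 else 0

noncomputable def w (x y : Fin n → Bool) : ℝ := ∏ i, (if x i = y i then (1 - p) else p)

lemma w_eq (x y : Fin n → Bool) :
    p ^ hammingDist x y * (1 - p) ^ (n - hammingDist x y) = w n p x y := by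
  classical
  rw [w, Finset.prod_ite]
  rw [Finset.prod_const, Finset.prod_const]
  have hd : hammingDist x y = ({i | x i ≠ y i} : Finset (Fin n)).card := rfl
  have h1 : (Finset.univ.filter fun i => ¬ (x i = y i)).card = hammingDist x y := by
    rw [hd]
  have h2 : (Finset.univ.filter fun i => x i = y i).card = n - hammingDist x y := by
    have := Finset.card_filter_add_card_filter_not (s := (Finset.univ : Finset (Fin n)))
      (p := fun i => x i = y i)
    rw [Finset.card_univ, Fintype.card_fin] at this
    omega
  rw [h1, h2, mul_comm]

lemma w_pos (hp : 0 < p) (hp2 : p < 1/2) (x y : Fin n → Bool) : 0 < w n p x y := by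
  apply Finset.prod_pos
  intro i _
  split <;> linarith

lemma w_symm (x y : Fin n → Bool) : w n p x y = w n p y x := by
  unfold w
  apply Finset.prod_congr rfl
  intro i _
  congr 1
  simp [eq_comm, eq_iff_iff]

lemma sum_w (x : Fin n → Bool) : ∑ y : Fin n → Bool, w n p x y = 1 := by
  classical
  unfold w
  rw [← Fintype.prod_sum (fun i (b : Bool) => if x i = b then (1 - p) else p)]
  rw [Finset.prod_eq_one]
  intro i _
  rw [Fintype.sum_bool]
  cases h : x i <;> simp <;> ring

lemma Tp_eq (f : (Fin n → Bool) → Bool) (x : Fin n → Bool) :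
    Tp n p f x = ∑ y : Fin n → Bool, w n p x y * F n f y := by
  unfold Tp F
  apply Finset.sum_congr rfl
  intro y _
  rw [w_eq]



noncomputable def chi (S : Finset (Fin n)) (x : Fin n → Bool) : ℝ :=
  ∏ i ∈ S, (if x i then (-1 : ℝ) else 1)

lemma chi_full (S : Finset (Fin n)) (x : Fin n → Bool) :
    chi n S x = ∏ i : Fin n, (if i ∈ S then (if x i then (-1:ℝ) else 1) else 1) := by
  rw [Finset.prod_ite_mem, Finset.univ_inter]
  rfl

lemma orth1 (S T : Finset (Fin n)) :
    ∑ x : Fin n → Bool, chi n S x * chi n T x = if S = T then (2:ℝ)^n else 0 := by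
  classical
  have key : ∀ x : Fin n → Bool, chi n S x * chi n T x
      = ∏ i : Fin n, ((if i ∈ S then (if x i then (-1:ℝ) else 1) else 1) *
                      (if i ∈ T then (if x i then (-1:ℝ) else 1) else 1)) := by
    intro x; rw [chi_full, chi_full, ← Finset.prod_mul_distrib]
  calc ∑ x : Fin n → Bool, chi n S x * chi n T x
      = ∑ x : Fin n → Bool, ∏ i : Fin n,
          ((if i ∈ S then (if x i then (-1:ℝ) else 1) else 1) *
           (if i ∈ T then (if x i then (-1:ℝ) else 1) else 1)) := by
        exact Finset.sum_congr rfl fun x _ => key x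
    _ = ∏ i : Fin n, ∑ b : Bool,
          ((if i ∈ S then (if b then (-1:ℝ) else 1) else 1) *
           (if i ∈ T then (if b then (-1:ℝ) else 1) else 1)) := by
        rw [Fintype.prod_sum]
    _ = ∏ i : Fin n, (if (i ∈ S ↔ i ∈ T) then (2:ℝ) else 0) := by
        apply Finset.prod_congr rfl
        intro i _
        rw [Fintype.sum_bool]
        by_cases hS : i ∈ S <;> by_cases hT : i ∈ T <;> simp [hS, hT] <;> norm_num
    _ = if S = T then (2:ℝ)^n else 0 := by
        by_cases h : S = T
        · subst h
          simp only [iff_self, if_true]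
          rw [Finset.prod_const, Finset.card_univ, Fintype.card_fin]
        · rw [if_neg h]
          have : ∃ i, ¬ (i ∈ S ↔ i ∈ T) := by
            by_contra hc
            push_neg at hc
            exact h (Finset.ext fun i => (hc i))
          obtain ⟨i, hi⟩ := this
          exact Finset.prod_eq_zero (Finset.mem_univ i) (by rw [if_neg hi])

lemma orth2 (x y : Fin n → Bool) :
    ∑ S : Finset (Fin n), chi n S x * chi n S y = if x = y then (2:ℝ)^n else 0 := by
  classical
  have key : ∀ S : Finset (Fin n), chi n S x * chi n S y
      = ∏ i ∈ S, ((if x i then (-1:ℝ) else 1) * (if y i then (-1:ℝ) else 1)) := by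
    intro S; rw [chi, chi, ← Finset.prod_mul_distrib]
  calc ∑ S : Finset (Fin n), chi n S x * chi n S y
      = ∑ S : Finset (Fin n),
          (∏ i ∈ S, ((if x i then (-1:ℝ) else 1) * (if y i then (-1:ℝ) else 1))) *
          ∏ i ∈ Sᶜ, (1:ℝ) := by
        apply Finset.sum_congr rfl
        intro S _
        rw [Finset.prod_const_one, mul_one]
        exact key S
    _ = ∏ i : Fin n, (((if x i then (-1:ℝ) else 1) * (if y i then (-1:ℝ) else 1)) + 1) := by
        rw [Fintype.prod_add]
    _ = ∏ i : Fin n, (if x i = y i then (2:ℝ) else 0) := by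
        apply Finset.prod_congr rfl
        intro i _
        cases hx : x i <;> cases hy : y i <;> norm_num
    _ = if x = y then (2:ℝ)^n else 0 := by
        by_cases h : x = y
        · subst h
          simp only [if_true]
          rw [Finset.prod_const, Finset.card_univ, Fintype.card_fin]
        · rw [if_neg h]
          have : ∃ i, x i ≠ y i := Function.ne_iff.mp h
          obtain ⟨i, hi⟩ := this
          exact Finset.prod_eq_zero (Finset.mem_univ i) (by rw [if_neg hi])

noncomputable def fhat (f : (Fin n → Bool) → Bool) (S : Finset (Fin n)) : ℝ :=
  ((2:ℝ)^n)⁻¹ * ∑ x : Fin n → Bool, F n f x * chi n S x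

lemma inversion (f : (Fin n → Bool) → Bool) (x : Fin n → Bool) :
    ∑ S : Finset (Fin n), fhat n f S * chi n S x = F n f x := by
  classical
  have h2n : ((2:ℝ)^n) ≠ 0 := by positivity
  calc ∑ S : Finset (Fin n), fhat n f S * chi n S x
      = ∑ S : Finset (Fin n), ∑ y : Fin n → Bool,
          ((2:ℝ)^n)⁻¹ * (F n f y * (chi n S y * chi n S x)) := by
        apply Finset.sum_congr rfl
        intro S _
        unfold fhat
        rw [Finset.mul_sum, Finset.sum_mul]
        apply Finset.sum_congr rfl
        intro y _
        ring
    _ = ∑ y : Fin n → Bool, ∑ S : Finset (Fin n),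
          ((2:ℝ)^n)⁻¹ * (F n f y * (chi n S y * chi n S x)) := Finset.sum_comm
    _ = ∑ y : Fin n → Bool,
          ((2:ℝ)^n)⁻¹ * (F n f y * (if y = x then (2:ℝ)^n else 0)) := by
        apply Finset.sum_congr rfl
        intro y _
        rw [← Finset.mul_sum, ← Finset.mul_sum, orth2]
    _ = ∑ y : Fin n → Bool, (if y = x then F n f y else 0) := by
        apply Finset.sum_congr rfl
        intro y _
        split_ifs with h
        · rw [mul_comm (F n f y) ((2:ℝ)^n), ← mul_assoc, inv_mul_cancel₀ h2n, one_mul]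
        · simp
    _ = F n f x := by
        rw [Finset.sum_ite_eq' Finset.univ x (fun y => F n f y)]
        simp

lemma noise_char (S : Finset (Fin n)) (x : Fin n → Bool) :
    ∑ y : Fin n → Bool, w n p x y * chi n S y = (1-2*p)^S.card * chi n S x := by
  classical
  calc ∑ y : Fin n → Bool, w n p x y * chi n S y
      = ∑ y : Fin n → Bool, ∏ i : Fin n,
          ((if x i = y i then (1-p) else p) *
           (if i ∈ S then (if y i then (-1:ℝ) else 1) else 1)) := by
        apply Finset.sum_congr rfl
        intro y _
        rw [w, chi_full, ← Finset.prod_mul_distrib]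
    _ = ∏ i : Fin n, ∑ b : Bool,
          ((if x i = b then (1-p) else p) *
           (if i ∈ S then (if b then (-1:ℝ) else 1) else 1)) := by
        rw [Fintype.prod_sum]
    _ = ∏ i : Fin n, (if i ∈ S then (1-2*p) * (if x i then (-1:ℝ) else 1) else 1) := by
        apply Finset.prod_congr rfl
        intro i _
        rw [Fintype.sum_bool]
        by_cases hS : i ∈ S <;> cases hx : x i <;> simp [hS, hx] <;> ring
    _ = (1-2*p)^S.card * chi n S x := by
        rw [Finset.prod_ite_mem, Finset.univ_inter, Finset.prod_mul_distrib,
          Finset.prod_const, chi]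

lemma t_expand (hp : 0 < p) (f : (Fin n → Bool) → Bool) (x : Fin n → Bool) :
    Tp n p f x = ∑ S : Finset (Fin n), ((1-2*p)^S.card * fhat n f S) * chi n S x := by
  classical
  rw [Tp_eq]
  calc ∑ y : Fin n → Bool, w n p x y * F n f y
      = ∑ y : Fin n → Bool, w n p x y * ∑ S : Finset (Fin n), fhat n f S * chi n S y := by
        apply Finset.sum_congr rfl
        intro y _
        rw [inversion]
    _ = ∑ y : Fin n → Bool, ∑ S : Finset (Fin n), fhat n f S * (w n p x y * chi n S y) := by
        apply Finset.sum_congr rfl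
        intro y _
        rw [Finset.mul_sum]
        apply Finset.sum_congr rfl
        intro S _
        ring
    _ = ∑ S : Finset (Fin n), fhat n f S * ∑ y : Fin n → Bool, (w n p x y * chi n S y) := by
        rw [Finset.sum_comm]
        exact Finset.sum_congr rfl fun S _ => (Finset.mul_sum _ _ _).symm
    _ = ∑ S : Finset (Fin n), ((1-2*p)^S.card * fhat n f S) * chi n S x := by
        apply Finset.sum_congr rfl
        intro S _
        rw [noise_char]
        ring

lemma parseval_bilin (a b : Finset (Fin n) → ℝ) :
    ∑ x : Fin n → Bool, (∑ S : Finset (Fin n), a S * chi n S x) *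
      (∑ S : Finset (Fin n), b S * chi n S x) = (2:ℝ)^n * ∑ S : Finset (Fin n), a S * b S := by
  classical
  calc ∑ x : Fin n → Bool, (∑ S : Finset (Fin n), a S * chi n S x) *
        (∑ S : Finset (Fin n), b S * chi n S x)
      = ∑ x : Fin n → Bool, ∑ S : Finset (Fin n), ∑ T : Finset (Fin n),
          (a S * b T) * (chi n S x * chi n T x) := by
        apply Finset.sum_congr rfl
        intro x _
        rw [Finset.sum_mul_sum]
        apply Finset.sum_congr rfl; intro S _
        apply Finset.sum_congr rfl; intro T _
        ring
    _ = ∑ S : Finset (Fin n), ∑ T : Finset (Fin n),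
          (a S * b T) * ∑ x : Fin n → Bool, (chi n S x * chi n T x) := by
        rw [Finset.sum_comm]
        apply Finset.sum_congr rfl
        intro S _
        rw [Finset.sum_comm]
        exact Finset.sum_congr rfl fun T _ => (Finset.mul_sum _ _ _).symm
    _ = ∑ S : Finset (Fin n), ∑ T : Finset (Fin n),
          (if S = T then (a S * b T) * (2:ℝ)^n else 0) := by
        apply Finset.sum_congr rfl; intro S _
        apply Finset.sum_congr rfl; intro T _
        rw [orth1]
        split_ifs <;> simp
    _ = (2:ℝ)^n * ∑ S : Finset (Fin n), a S * b S := by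
        rw [Finset.mul_sum]
        apply Finset.sum_congr rfl
        intro S _
        rw [Finset.sum_ite_eq Finset.univ S (fun T => (a S * b T) * (2:ℝ)^n)]
        simp [mul_comm]

lemma card_cube : Fintype.card (Fin n → Bool) = 2^n := by simp

variable {n p}

lemma exists_true {f : (Fin n → Bool) → Bool} (hf : IsBalanced n f) : ∃ y, f y = true := by
  by_contra hc
  push_neg at hc
  have : ∑ y : Fin n → Bool, F n f y = 0 := by
    apply Finset.sum_eq_zero
    intro y _
    simp [F, hc y]
  rw [IsBalanced] at hf
  have h2 : (0:ℝ) < 2^n := by positivity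
  rw [show (∑ y : Fin n → Bool, (if f y then (1:ℝ) else 0)) = ∑ y : Fin n → Bool, F n f y from rfl, this] at hf
  linarith

lemma exists_false {f : (Fin n → Bool) → Bool} (hf : IsBalanced n f) : ∃ y, f y = false := by
  by_contra hc
  push_neg at hc
  simp only [Bool.not_eq_false] at hc
  have : ∑ y : Fin n → Bool, (if f y then (1:ℝ) else 0) = 2^n := by
    rw [Finset.sum_congr rfl fun y (_ : y ∈ Finset.univ) => if_pos (hc y)]
    rw [Finset.sum_const, Finset.card_univ, card_cube]
    simp
  rw [IsBalanced, this] at hf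
  have h2 : (0:ℝ) < 2^n := by positivity
  linarith

lemma F_nonneg (f : (Fin n → Bool) → Bool) (y : Fin n → Bool) : 0 ≤ F n f y := by
  unfold F; split <;> norm_num

lemma F_le_one (f : (Fin n → Bool) → Bool) (y : Fin n → Bool) : F n f y ≤ 1 := by
  unfold F; split <;> norm_num

lemma Tp_pos (hp : 0 < p) (hp2 : p < 1/2) {f : (Fin n → Bool) → Bool} (hf : IsBalanced n f)
    (x : Fin n → Bool) : 0 < Tp n p f x := by
  obtain ⟨y₁, hy₁⟩ := exists_true hf
  rw [Tp_eq]
  have hterm : w n p x y₁ * F n f y₁ = w n p x y₁ := by simp [F, hy₁]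
  calc (0:ℝ) < w n p x y₁ * F n f y₁ := by rw [hterm]; exact w_pos n p hp hp2 x y₁
    _ ≤ ∑ y : Fin n → Bool, w n p x y * F n f y := by
        apply Finset.single_le_sum (f := fun y => w n p x y * F n f y) _ (Finset.mem_univ y₁)
        intro y _
        exact mul_nonneg (w_pos n p hp hp2 x y).le (F_nonneg f y)

lemma Tp_lt_one (hp : 0 < p) (hp2 : p < 1/2) {f : (Fin n → Bool) → Bool} (hf : IsBalanced n f)
    (x : Fin n → Bool) : Tp n p f x < 1 := by
  obtain ⟨y₀, hy₀⟩ := exists_false hf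
  have key : 1 - Tp n p f x = ∑ y : Fin n → Bool, w n p x y * (1 - F n f y) := by
    rw [Tp_eq]
    have := sum_w n p x
    rw [Finset.sum_congr rfl (fun y (_ : y ∈ Finset.univ) => (mul_one_sub (w n p x y) (F n f y)))]
    rw [Finset.sum_sub_distrib, this]
  have hterm : w n p x y₀ * (1 - F n f y₀) = w n p x y₀ := by simp [F, hy₀]
  have : 0 < 1 - Tp n p f x := by
    rw [key]
    calc (0:ℝ) < w n p x y₀ * (1 - F n f y₀) := by rw [hterm]; exact w_pos n p hp hp2 x y₀
      _ ≤ ∑ y : Fin n → Bool, w n p x y * (1 - F n f y) := by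
          apply Finset.single_le_sum (f := fun y => w n p x y * (1 - F n f y)) _ (Finset.mem_univ y₀)
          intro y _
          exact mul_nonneg (w_pos n p hp hp2 x y).le (by linarith [F_le_one f y])
  linarith

lemma sum_Tp {f : (Fin n → Bool) → Bool} (hf : IsBalanced n f) :
    ∑ x : Fin n → Bool, Tp n p f x = 2^n/2 := by
  calc ∑ x : Fin n → Bool, Tp n p f x
      = ∑ x : Fin n → Bool, ∑ y : Fin n → Bool, w n p x y * F n f y := by
        exact Finset.sum_congr rfl fun x _ => Tp_eq n p f x
    _ = ∑ y : Fin n → Bool, (∑ x : Fin n → Bool, w n p x y) * F n f y := by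
        rw [Finset.sum_comm]
        exact Finset.sum_congr rfl fun y _ => (Finset.sum_mul _ _ _).symm
    _ = ∑ y : Fin n → Bool, F n f y := by
        apply Finset.sum_congr rfl
        intro y _
        rw [Finset.sum_congr rfl (fun x (_ : x ∈ Finset.univ) => w_symm n p x y), sum_w, one_mul]
    _ = 2^n/2 := hf

lemma hat_empty {f : (Fin n → Bool) → Bool} (hf : IsBalanced n f) : fhat n f ∅ = 1/2 := by
  unfold fhat
  have : ∑ x : Fin n → Bool, F n f x * chi n ∅ x = 2^n/2 := by
    rw [Finset.sum_congr rfl (fun x (_ : x ∈ Finset.univ) => by rw [chi, Finset.prod_empty, mul_one])]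
    exact hf
  rw [this]
  have h2n : ((2:ℝ)^n) ≠ 0 := by positivity
  field_simp

lemma parsevalF {f : (Fin n → Bool) → Bool} (hf : IsBalanced n f) :
    ∑ S : Finset (Fin n), (fhat n f S)^2 = 1/2 := by
  have hb := parseval_bilin n (fhat n f) (fhat n f)
  have hL : ∑ x : Fin n → Bool, (∑ S : Finset (Fin n), fhat n f S * chi n S x) *
      (∑ S : Finset (Fin n), fhat n f S * chi n S x) = 2^n/2 := by
    rw [Finset.sum_congr rfl (fun x (_ : x ∈ Finset.univ) => by
      rw [inversion n f x])]
    calc ∑ x : Fin n → Bool, F n f x * F n f x = ∑ x : Fin n → Bool, F n f x := by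
          apply Finset.sum_congr rfl
          intro x _
          unfold F
          split <;> norm_num
      _ = 2^n/2 := hf
  rw [hL] at hb
  have h2n : ((2:ℝ)^n) ≠ 0 := by positivity
  have hb' : (2:ℝ)^n * ∑ S : Finset (Fin n), fhat n f S * fhat n f S = 2^n * (1/2) := by
    rw [← hb]; ring
  have : ∑ S : Finset (Fin n), fhat n f S * fhat n f S = 1/2 := mul_left_cancel₀ h2n hb'
  rw [← this]
  exact Finset.sum_congr rfl fun S _ => sq (fhat n f S)

lemma sum_Tp_sq (hp : 0 < p) {f : (Fin n → Bool) → Bool} :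
    ∑ x : Fin n → Bool, (Tp n p f x)^2
      = 2^n * ∑ S : Finset (Fin n), ((1-2*p)^S.card * fhat n f S)^2 := by
  have hb := parseval_bilin n (fun S => (1-2*p)^S.card * fhat n f S)
    (fun S => (1-2*p)^S.card * fhat n f S)
  rw [Finset.sum_congr rfl (fun x (_ : x ∈ Finset.univ) => by
    rw [← t_expand n p hp f x])] at hb
  rw [Finset.sum_congr rfl (fun x (_ : x ∈ Finset.univ) => (sq (Tp n p f x)))]
  rw [hb]
  exact congrArg _ (Finset.sum_congr rfl fun S _ => (sq _).symm)

lemma quad_bound (hp : 0 < p) (hp2 : p < 1/2) {f : (Fin n → Bool) → Bool} (hf : IsBalanced n f) :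
    ∑ x : Fin n → Bool, (Tp n p f x)^2 ≤ 2^n * (1/4 + (1-2*p)^2/4) ∧
    (∑ x : Fin n → Bool, (Tp n p f x)^2 = 2^n * (1/4 + (1-2*p)^2/4) →
      ∀ x, Tp n p f x = p ∨ Tp n p f x = 1-p) := by
  classical
  set ρ : ℝ := 1 - 2*p with hρ
  have hρ0 : 0 < ρ := by rw [hρ]; linarith
  have hρ1 : ρ < 1 := by rw [hρ]; linarith
  have h2n : (0:ℝ) < 2^n := by positivity
  set A : Finset (Fin n) → ℝ := fun S => (ρ^S.card * fhat n f S)^2 with hA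
  have hsplit : ∑ S : Finset (Fin n), A S
      = ∑ S ∈ Finset.univ.erase ∅, A S + A ∅ :=
    (Finset.sum_erase_add Finset.univ A (Finset.mem_univ ∅)).symm
  have hA0 : A ∅ = 1/4 := by
    rw [hA]
    simp only [Finset.card_empty, pow_zero, one_mul]
    rw [hat_empty hf]
    norm_num
  have hsplit2 : ∑ S ∈ Finset.univ.erase ∅, (fhat n f S)^2 = 1/4 := by
    have h1 := Finset.sum_erase_add Finset.univ (fun S => (fhat n f S)^2) (Finset.mem_univ ∅)
    rw [parsevalF hf] at h1
    have h2 : ∑ S ∈ Finset.univ.erase ∅, (fhat n f S)^2 + (fhat n f ∅)^2 = 1/2 := h1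
    have h0 : (fhat n f ∅)^2 = 1/4 := by rw [hat_empty hf]; norm_num
    linarith
  have hterm : ∀ S : Finset (Fin n), S ∈ Finset.univ.erase ∅ → A S ≤ ρ^2 * (fhat n f S)^2 := by
    intro S hS
    have hSne : S ≠ ∅ := Finset.ne_of_mem_erase hS
    have hcard : 1 ≤ S.card := Finset.card_pos.mpr (Finset.nonempty_iff_ne_empty.mpr hSne)
    have : (ρ^S.card)^2 ≤ ρ^2 := by
      rw [← pow_mul]
      apply pow_le_pow_of_le_one hρ0.le hρ1.le
      omega
    rw [hA]
    simp only []
    rw [mul_pow]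
    exact mul_le_mul_of_nonneg_right this (sq_nonneg _)
  have hineq : ∑ S : Finset (Fin n), A S ≤ 1/4 + ρ^2/4 := by
    rw [hsplit, hA0]
    have : ∑ S ∈ Finset.univ.erase ∅, A S ≤ ρ^2/4 := by
      calc ∑ S ∈ Finset.univ.erase ∅, A S
          ≤ ∑ S ∈ Finset.univ.erase ∅, ρ^2 * (fhat n f S)^2 := Finset.sum_le_sum hterm
        _ = ρ^2 * (1/4) := by rw [← Finset.mul_sum, hsplit2]
        _ = ρ^2/4 := by ring
    linarith
  have hsq := sum_Tp_sq (n := n) hp (f := f)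
  constructor
  · rw [hsq]
    calc 2^n * ∑ S : Finset (Fin n), A S ≤ 2^n * (1/4 + ρ^2/4) :=
        mul_le_mul_of_nonneg_left hineq h2n.le
      _ = 2^n * (1/4 + (1-2*p)^2/4) := by rw [hρ]
  · intro heq x
    -- equality forces fhat S = 0 for card S ≥ 2
    have hAeq : ∑ S : Finset (Fin n), A S = 1/4 + ρ^2/4 := by
      rw [hsq] at heq
      have : (2:ℝ)^n * ∑ S : Finset (Fin n), A S = 2^n * (1/4 + (1-2*p)^2/4) := heq
      have := mul_left_cancel₀ (ne_of_gt h2n) this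
      rw [this, hρ]
    have hzero : ∀ S ∈ Finset.univ.erase ∅, ρ^2 * (fhat n f S)^2 - A S = 0 := by
      have hsum0 : ∑ S ∈ Finset.univ.erase ∅, (ρ^2 * (fhat n f S)^2 - A S) = 0 := by
        rw [Finset.sum_sub_distrib, ← Finset.mul_sum, hsplit2]
        have : ∑ S ∈ Finset.univ.erase ∅, A S = ρ^2/4 := by
          rw [hsplit, hA0] at hAeq
          linarith
        rw [this]
        ring
      have hnn : ∀ S ∈ Finset.univ.erase ∅, 0 ≤ ρ^2 * (fhat n f S)^2 - A S := by
        intro S hS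
        linarith [hterm S hS]
      intro S hS
      exact (Finset.sum_eq_zero_iff_of_nonneg hnn).mp hsum0 S hS
    have hfh2 : ∀ S : Finset (Fin n), 2 ≤ S.card → fhat n f S = 0 := by
      intro S hS2
      have hSne : S ≠ ∅ := by
        intro h
        rw [h] at hS2
        simp at hS2
      have h := hzero S (Finset.mem_erase.mpr ⟨hSne, Finset.mem_univ S⟩)
      rw [hA] at h
      simp only [] at h
      rw [mul_pow, ← pow_mul] at h
      have hlt : ρ^(S.card * 2) < ρ^2 := by
        apply pow_lt_pow_right_of_lt_one₀ hρ0 hρ1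
        omega
      by_contra hne
      have hsq : 0 < (fhat n f S)^2 := by positivity
      nlinarith
    -- pointwise identification
    have key : Tp n p f x - ρ * F n f x = p := by
      rw [t_expand n p hp f x, ← inversion n f x, Finset.mul_sum, ← Finset.sum_sub_distrib]
      have : ∀ S ∈ (Finset.univ : Finset (Finset (Fin n))),
          (ρ^S.card * fhat n f S) * chi n S x - ρ * (fhat n f S * chi n S x)
          = (ρ^S.card - ρ) * fhat n f S * chi n S x := by
        intro S _
        ring
      rw [Finset.sum_congr rfl this]
      rw [Finset.sum_eq_single ∅]
      · rw [Finset.card_empty, pow_zero, hat_empty hf, chi, Finset.prod_empty, hρ]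
        ring
      · intro S _ hSne
        have hcard : 1 ≤ S.card := Finset.card_pos.mpr (Finset.nonempty_iff_ne_empty.mpr hSne)
        rcases Nat.lt_or_ge S.card 2 with hc | hc
        · have : S.card = 1 := by omega
          rw [this, pow_one, sub_self, zero_mul, zero_mul]
        · rw [hfh2 S hc, mul_zero, zero_mul]
      · intro h
        exact absurd (Finset.mem_univ ∅) h
    unfold F at key
    by_cases hx : f x
    · right
      rw [if_pos hx] at key
      rw [hρ] at key
      linarith
    · left
      rw [if_neg hx] at key
      rw [hρ] at key
      linarith

variable (n p)

lemma Tp_dict (i : Fin n) (x : Fin n → Bool) :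
    Tp n p (dict n i) x = if x i then 1-p else p := by
  classical
  rw [Tp_eq]
  calc ∑ y : Fin n → Bool, w n p x y * F n (dict n i) y
      = ∑ y : Fin n → Bool, ∏ j : Fin n,
          ((if x j = y j then (1-p) else p) * (if j = i then (if y j then (1:ℝ) else 0) else 1)) := by
        apply Finset.sum_congr rfl
        intro y _
        rw [Finset.prod_mul_distrib]
        congr 1
        rw [Finset.prod_ite_eq' Finset.univ i (fun j => if y j then (1:ℝ) else 0), if_pos (Finset.mem_univ i)]
        rfl
    _ = ∏ j : Fin n, ∑ b : Bool,
          ((if x j = b then (1-p) else p) * (if j = i then (if b then (1:ℝ) else 0) else 1)) := by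
        rw [Fintype.prod_sum]
    _ = ∏ j : Fin n, (if j = i then (if x i then 1-p else p) else 1) := by
        apply Finset.prod_congr rfl
        intro j _
        rw [Fintype.sum_bool]
        by_cases hj : j = i
        · subst hj
          cases hx : x j <;> simp [hx]
        · cases hx : x j <;> simp [hj, hx] <;> ring
    _ = if x i then 1-p else p := by
        rw [Finset.prod_ite_eq' Finset.univ i (fun j => if x i then 1-p else p),
          if_pos (Finset.mem_univ i)]

lemma Nsym_dict (i : Fin n) (α : ℝ) :
    Nsym n p (dict n i) α = 2^n * ((1-p) ^ α + p ^ α) := by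
  unfold Nsym
  have : ∀ x : Fin n → Bool,
      Tp n p (dict n i) x ^ α + (1 - Tp n p (dict n i) x) ^ α = (1-p) ^ α + p ^ α := by
    intro x
    rw [Tp_dict]
    cases hx : x i
    · show (p:ℝ) ^ α + (1 - p) ^ α = (1-p) ^ α + p ^ α
      exact add_comm _ _
    · show ((1:ℝ)-p) ^ α + (1 - (1-p)) ^ α = (1-p) ^ α + p ^ α
      rw [show (1:ℝ) - (1-p) = p by ring]
  rw [Finset.sum_congr rfl (fun x (_ : x ∈ Finset.univ) => this x)]
  rw [Finset.sum_const, Finset.card_univ, card_cube]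
  simp only [nsmul_eq_mul, Nat.cast_pow, Nat.cast_ofNat]


variable {ι : Type*} [Fintype ι]

noncomputable def esum (u c : ι → ℝ) (α : ℝ) : ℝ := ∑ j, c j * u j ^ α

lemma esum_hasDerivAt (u c : ι → ℝ) (hu : ∀ j, 0 < u j) (α : ℝ) :
    HasDerivAt (esum u c) (esum u (fun j => c j * Real.log (u j)) α) α := by
  have : ∀ j ∈ Finset.univ, HasDerivAt (fun β => c j * u j ^ β)
      ((fun j => c j * Real.log (u j)) j * u j ^ α) α := by
    intro j _
    have h := (Real.hasStrictDerivAt_const_rpow (hu j) α).hasDerivAt.const_mul (c j)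
    exact h.congr_deriv (by ring)
  have hsum := HasDerivAt.fun_sum this
  exact hsum

lemma esum_continuous (u c : ι → ℝ) (hu : ∀ j, 0 < u j) : Continuous (esum u c) :=
  continuous_iff_continuousAt.mpr fun α => (esum_hasDerivAt u c hu α).continuousAt

lemma esum_step (u c : ι → ℝ) (hu : ∀ j, 0 < u j) (w : ℝ) (hw : 0 < w)
    {a b : ℝ} (hab : a < b) (ha : esum u c a = 0) (hb : esum u c b = 0) :
    ∃ ξ, a < ξ ∧ ξ < b ∧ esum u (fun j => c j * Real.log (u j / w)) ξ = 0 := by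
  set H : ℝ → ℝ := fun α => esum u c α * w ^ (-α) with hH
  have hderiv : ∀ α : ℝ, HasDerivAt H
      ((esum u (fun j => c j * Real.log (u j / w)) α) * w ^ (-α)) α := by
    intro α
    have h1 := esum_hasDerivAt u c hu α
    have h2 : HasDerivAt (fun β : ℝ => w ^ (-β)) (w ^ (-α) * Real.log w * (-1)) α := by
      have hcomp := ((Real.hasStrictDerivAt_const_rpow hw (-α)).hasDerivAt).comp α (hasDerivAt_neg α)
      exact hcomp
    have hmul := h1.mul h2
    have expand : esum u (fun j => c j * Real.log (u j / w)) α * w ^ (-α)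
        = esum u (fun j => c j * Real.log (u j)) α * w ^ (-α)
          + esum u c α * (w ^ (-α) * Real.log w * -1) := by
      unfold esum
      rw [Finset.sum_mul, Finset.sum_mul, Finset.sum_mul, ← Finset.sum_add_distrib]
      apply Finset.sum_congr rfl
      intro j _
      show c j * Real.log (u j / w) * u j ^ α * w ^ (-α)
          = c j * Real.log (u j) * u j ^ α * w ^ (-α) + c j * u j ^ α * (w ^ (-α) * Real.log w * -1)
      rw [Real.log_div (ne_of_gt (hu j)) (ne_of_gt hw)]
      ring
    rw [← expand] at hmul
    exact hmul
  have hcont : ContinuousOn H (Set.Icc a b) := by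
    apply Continuous.continuousOn
    exact continuous_iff_continuousAt.mpr fun α => (hderiv α).continuousAt
  have hHa : H a = 0 := by rw [hH]; simp [ha]
  have hHb : H b = 0 := by rw [hH]; simp [hb]
  obtain ⟨ξ, hξ, hz⟩ := exists_hasDerivAt_eq_zero hab hcont (by rw [hHa, hHb])
    (fun x _ => hderiv x)
  refine ⟨ξ, hξ.1, hξ.2, ?_⟩
  have hwξ : (0:ℝ) < w ^ (-ξ) := Real.rpow_pos_of_pos hw _
  exact (mul_eq_zero.mp hz).resolve_right (ne_of_gt hwξ)

lemma esum_twoterm (u c : ι → ℝ) (hu : ∀ j, 0 < u j) {P Q : ℝ} (hP : 0 < P) (hQ : 0 < Q)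
    (hPQ : P ≠ Q) (hsupp : ∀ j, c j ≠ 0 → u j = P ∨ u j = Q)
    {z1 z2 : ℝ} (h12 : z1 ≠ z2) (h1 : esum u c z1 = 0) (h2 : esum u c z2 = 0) :
    ∀ α, esum u c α = 0 := by
  classical
  set C1 : ℝ := ∑ j, (if u j = P then c j else 0) with hC1
  set C2 : ℝ := ∑ j, (if u j = Q then c j else 0) with hC2
  have hrep : ∀ α, esum u c α = C1 * P ^ α + C2 * Q ^ α := by
    intro α
    rw [hC1, hC2, Finset.sum_mul, Finset.sum_mul, ← Finset.sum_add_distrib]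
    unfold esum
    apply Finset.sum_congr rfl
    intro j _
    by_cases hcj : c j = 0
    · simp [hcj]
    · rcases hsupp j hcj with h | h
      · rw [if_pos h, if_neg (by rw [h]; exact hPQ), h]
        ring
      · rw [if_neg (by rw [h]; intro hh; exact hPQ hh.symm), if_pos h, h]
        ring
  -- solve the 2x2 linear system
  have e1 : C1 * P ^ z1 + C2 * Q ^ z1 = 0 := by rw [← hrep]; exact h1
  have e2 : C1 * P ^ z2 + C2 * Q ^ z2 = 0 := by rw [← hrep]; exact h2
  have hdet : P ^ z1 * Q ^ z2 - P ^ z2 * Q ^ z1 ≠ 0 := by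
    intro h
    have hQz1 : (0:ℝ) < Q ^ z1 := Real.rpow_pos_of_pos hQ _
    have hQz2 : (0:ℝ) < Q ^ z2 := Real.rpow_pos_of_pos hQ _
    have hr : (P/Q) ^ z1 = (P/Q) ^ z2 := by
      rw [Real.div_rpow hP.le hQ.le, Real.div_rpow hP.le hQ.le]
      rw [div_eq_div_iff hQz1.ne' hQz2.ne']
      linarith
    have hlog : z1 * Real.log (P/Q) = z2 * Real.log (P/Q) := by
      have h1' : (P/Q) ^ z1 = Real.exp (z1 * Real.log (P/Q)) := by
        rw [Real.rpow_def_of_pos (div_pos hP hQ)]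
        ring_nf
      have h2' : (P/Q) ^ z2 = Real.exp (z2 * Real.log (P/Q)) := by
        rw [Real.rpow_def_of_pos (div_pos hP hQ)]
        ring_nf
      rw [h1', h2'] at hr
      exact Real.exp_injective hr
    have hlogne : Real.log (P/Q) ≠ 0 := by
      intro h0
      rcases Real.log_eq_zero.mp h0 with h' | h' | h'
      · exact absurd h' (ne_of_gt (div_pos hP hQ))
      · apply hPQ
        have : P = Q := by
          field_simp at h'
          linarith
        exact this
      · nlinarith [div_pos hP hQ]
    exact h12 (by
      have := mul_right_cancel₀ hlogne hlog
      exact this)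
  have hC1z : C1 = 0 := by
    have a1 : C1 * P ^ z1 = -(C2 * Q ^ z1) := by linarith
    have a2 : C1 * P ^ z2 = -(C2 * Q ^ z2) := by linarith
    have h3 : C1 * (P ^ z1 * Q ^ z2 - P ^ z2 * Q ^ z1) = 0 := by
      calc C1 * (P ^ z1 * Q ^ z2 - P ^ z2 * Q ^ z1)
          = (C1 * P ^ z1) * Q ^ z2 - (C1 * P ^ z2) * Q ^ z1 := by ring
        _ = (-(C2 * Q ^ z1)) * Q ^ z2 - (-(C2 * Q ^ z2)) * Q ^ z1 := by rw [a1, a2]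
        _ = 0 := by ring
    exact (mul_eq_zero.mp h3).resolve_right hdet
  have hC2z : C2 = 0 := by
    have hQz1 : (0:ℝ) < Q ^ z1 := Real.rpow_pos_of_pos hQ _
    have : C2 * Q ^ z1 = 0 := by rw [hC1z] at e1; linarith
    exact (mul_eq_zero.mp this).resolve_right (ne_of_gt hQz1)
  intro α
  rw [hrep, hC1z, hC2z]
  ring

lemma log_div_ne_zero {v P : ℝ} (hv : 0 < v) (hP : 0 < P) (hne : v ≠ P) :
    Real.log (v / P) ≠ 0 := by
  intro h0
  rcases Real.log_eq_zero.mp h0 with h' | h' | h'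
  · exact absurd h' (ne_of_gt (div_pos hv hP))
  · apply hne
    field_simp at h'
    linarith
  · nlinarith [div_pos hv hP]

lemma esum_master_B (u c : ι → ℝ) (hu : ∀ j, 0 < u j) {P Q : ℝ} (hP : 0 < P) (hQ : 0 < Q)
    (hPQ : P ≠ Q) (hsign : ∀ j, u j ≠ P → u j ≠ Q → 0 ≤ c j)
    {z1 z2 z3 z4 z5 : ℝ} (h12 : z1 < z2) (h23 : z2 < z3) (h34 : z3 < z4) (h45 : z4 < z5)
    (e1 : esum u c z1 = 0) (e2 : esum u c z2 = 0) (e3 : esum u c z3 = 0)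
    (e4 : esum u c z4 = 0) (e5 : esum u c z5 = 0) :
    ∀ α, esum u c α = 0 := by
  classical
  set c1 : ι → ℝ := fun j => c j * Real.log (u j / P) with hc1
  set c2 : ι → ℝ := fun j => c1 j * Real.log (u j / Q) with hc2
  set c3 : ι → ℝ := fun j => c2 j * Real.log (u j / P) with hc3
  set c4 : ι → ℝ := fun j => c3 j * Real.log (u j / Q) with hc4
  obtain ⟨a1, ha1l, ha1r, hA1⟩ := esum_step u c hu P hP h12 e1 e2
  obtain ⟨a2, ha2l, ha2r, hA2⟩ := esum_step u c hu P hP h23 e2 e3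
  obtain ⟨a3, ha3l, ha3r, hA3⟩ := esum_step u c hu P hP h34 e3 e4
  obtain ⟨a4, ha4l, ha4r, hA4⟩ := esum_step u c hu P hP h45 e4 e5
  have o12 : a1 < a2 := lt_trans ha1r ha2l
  have o23 : a2 < a3 := lt_trans ha2r ha3l
  have o34 : a3 < a4 := lt_trans ha3r ha4l
  obtain ⟨b1, hb1l, hb1r, hB1⟩ := esum_step u c1 hu Q hQ o12 hA1 hA2
  obtain ⟨b2, hb2l, hb2r, hB2⟩ := esum_step u c1 hu Q hQ o23 hA2 hA3
  obtain ⟨b3, hb3l, hb3r, hB3⟩ := esum_step u c1 hu Q hQ o34 hA3 hA4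
  have p12 : b1 < b2 := lt_trans hb1r hb2l
  have p23 : b2 < b3 := lt_trans hb2r hb3l
  obtain ⟨d1, hd1l, hd1r, hD1⟩ := esum_step u c2 hu P hP p12 hB1 hB2
  obtain ⟨d2, hd2l, hd2r, hD2⟩ := esum_step u c2 hu P hP p23 hB2 hB3
  have q12 : d1 < d2 := lt_trans hd1r hd2l
  obtain ⟨ζ, hζl, hζr, hZ⟩ := esum_step u c3 hu Q hQ q12 hD1 hD2
  -- all terms of esum u c4 ζ are nonnegative
  have hnn : ∀ j ∈ Finset.univ, (0:ℝ) ≤ c4 j * u j ^ ζ := by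
    intro j _
    by_cases hjP : u j = P
    · have : Real.log (u j / P) = 0 := by rw [hjP, div_self (ne_of_gt hP), Real.log_one]
      rw [hc4, hc3, hc2, hc1]
      simp only [this]
      ring_nf
      exact le_of_eq (by ring)
    · by_cases hjQ : u j = Q
      · have : Real.log (u j / Q) = 0 := by rw [hjQ, div_self (ne_of_gt hQ), Real.log_one]
        rw [hc4]
        simp only [this]
        ring_nf
        exact le_of_eq (by ring)
      · have hcj := hsign j hjP hjQ
        have : c4 j * u j ^ ζ
            = c j * ((Real.log (u j / P) * Real.log (u j / Q))^2 * u j ^ ζ) := by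
          rw [hc4, hc3, hc2, hc1]; ring
        rw [this]
        have hup : (0:ℝ) < u j ^ ζ := Real.rpow_pos_of_pos (hu j) _
        positivity
  have hall : ∀ j ∈ Finset.univ, c4 j * u j ^ ζ = 0 :=
    fun j hj => (Finset.sum_eq_zero_iff_of_nonneg hnn).mp hZ j hj
  have hsupp : ∀ j, c j ≠ 0 → u j = P ∨ u j = Q := by
    intro j hcj
    by_contra hcontra
    push_neg at hcontra
    obtain ⟨hjP, hjQ⟩ := hcontra
    have h0 := hall j (Finset.mem_univ j)
    have hup : (0:ℝ) < u j ^ ζ := Real.rpow_pos_of_pos (hu j) _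
    have hLp := log_div_ne_zero (hu j) hP hjP
    have hLq := log_div_ne_zero (hu j) hQ hjQ
    rw [hc4, hc3, hc2, hc1] at h0
    have : c j * Real.log (u j / P) * Real.log (u j / Q) * Real.log (u j / P)
        * Real.log (u j / Q) * u j ^ ζ = 0 := h0
    apply hcj
    have h1 := mul_eq_zero.mp this
    rcases h1 with h1 | h1
    · rcases mul_eq_zero.mp h1 with h2 | h2
      · rcases mul_eq_zero.mp h2 with h3 | h3
        · rcases mul_eq_zero.mp h3 with h4 | h4
          · rcases mul_eq_zero.mp h4 with h5 | h5
            · exact h5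
            · exact absurd h5 hLp
          · exact absurd h4 hLq
        · exact absurd h3 hLp
      · exact absurd h2 hLq
    · exact absurd h1 (ne_of_gt hup)
  exact esum_twoterm u c hu hP hQ hPQ hsupp (ne_of_lt h12) e1 e2

lemma esum_master_A (u c : ι → ℝ) (hu : ∀ j, 0 < u j) {P Q : ℝ} (hP : 0 < P) (hQ : 0 < Q)
    (hPQ : P < Q) (hlow : ∀ j, P ≤ u j) (hhigh : ∀ j, u j ≤ Q)
    (hsign : ∀ j, u j ≠ P → u j ≠ Q → 0 ≤ c j)
    {z1 z2 z3 : ℝ} (h12 : z1 < z2) (h23 : z2 < z3)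
    (e1 : esum u c z1 = 0) (e2 : esum u c z2 = 0) (e3 : esum u c z3 = 0) :
    ∀ α, esum u c α = 0 := by
  classical
  set c1 : ι → ℝ := fun j => c j * Real.log (u j / P) with hc1
  set c2 : ι → ℝ := fun j => c1 j * Real.log (u j / Q) with hc2
  obtain ⟨a1, ha1l, ha1r, hA1⟩ := esum_step u c hu P hP h12 e1 e2
  obtain ⟨a2, ha2l, ha2r, hA2⟩ := esum_step u c hu P hP h23 e2 e3
  have o12 : a1 < a2 := lt_trans ha1r ha2l
  obtain ⟨ζ, hζl, hζr, hZ⟩ := esum_step u c1 hu Q hQ o12 hA1 hA2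
  have hnn : ∀ j ∈ Finset.univ, (0:ℝ) ≤ -(c2 j * u j ^ ζ) := by
    intro j _
    by_cases hjP : u j = P
    · have h0 : Real.log (u j / P) = 0 := by rw [hjP, div_self (ne_of_gt hP), Real.log_one]
      rw [hc2, hc1]
      simp only [h0]
      ring_nf
      exact le_of_eq (by ring)
    · by_cases hjQ : u j = Q
      · have h0 : Real.log (u j / Q) = 0 := by rw [hjQ, div_self (ne_of_gt hQ), Real.log_one]
        rw [hc2]
        simp only [h0]
        ring_nf
        exact le_of_eq (by ring)
      · have hcj := hsign j hjP hjQ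
        have hLp : 0 ≤ Real.log (u j / P) :=
          Real.log_nonneg ((one_le_div hP).mpr (hlow j))
        have hLq : Real.log (u j / Q) ≤ 0 :=
          Real.log_nonpos (div_pos (hu j) hQ).le ((div_le_one hQ).mpr (hhigh j))
        have hup : (0:ℝ) < u j ^ ζ := Real.rpow_pos_of_pos (hu j) _
        have : -(c2 j * u j ^ ζ)
            = (c j * Real.log (u j / P)) * (-(Real.log (u j / Q))) * u j ^ ζ := by
          rw [hc2, hc1]; ring
        rw [this]
        apply mul_nonneg
        apply mul_nonneg
        · exact mul_nonneg hcj hLp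
        · linarith
        · exact hup.le
  have hZ' : ∑ j, -(c2 j * u j ^ ζ) = 0 := by
    rw [Finset.sum_neg_distrib]
    rw [show (∑ j, c2 j * u j ^ ζ) = esum u c2 ζ from rfl, hZ]
    ring
  have hall : ∀ j ∈ Finset.univ, -(c2 j * u j ^ ζ) = 0 :=
    fun j hj => (Finset.sum_eq_zero_iff_of_nonneg hnn).mp hZ' j hj
  have hsupp : ∀ j, c j ≠ 0 → u j = P ∨ u j = Q := by
    intro j hcj
    by_contra hcontra
    push_neg at hcontra
    obtain ⟨hjP, hjQ⟩ := hcontra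
    have h0 := hall j (Finset.mem_univ j)
    have hup : (0:ℝ) < u j ^ ζ := Real.rpow_pos_of_pos (hu j) _
    have hLp := log_div_ne_zero (hu j) hP hjP
    have hLq := log_div_ne_zero (hu j) hQ hjQ
    rw [hc2, hc1] at h0
    have h0' : c j * Real.log (u j / P) * Real.log (u j / Q) * u j ^ ζ = 0 := by
      have : c j * Real.log (u j / P) * Real.log (u j / Q) * u j ^ ζ
          = -(-(c j * Real.log (u j / P) * Real.log (u j / Q) * u j ^ ζ)) := by ring
      rw [this, neg_eq_zero]
      exact h0
    apply hcj
    rcases mul_eq_zero.mp h0' with h1 | h1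
    · rcases mul_eq_zero.mp h1 with h2 | h2
      · rcases mul_eq_zero.mp h2 with h3 | h3
        · exact h3
        · exact absurd h3 hLp
      · exact absurd h2 hLq
    · exact absurd h1 (ne_of_gt hup)
  exact esum_twoterm u c hu hP hQ (ne_of_lt hPQ) hsupp (ne_of_lt h12) e1 e2

lemma esum_tendsto_zero (u c : ι → ℝ) (hu : ∀ j, 0 < u j) (hu1 : ∀ j, u j < 1) :
    Tendsto (esum u c) atTop (𝓝 0) := by
  have h := tendsto_finset_sum (Finset.univ : Finset ι) (fun j _ =>
    Tendsto.const_mul (c j) (tendsto_rpow_atTop_of_base_lt_one (u j)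
      (by linarith [hu j]) (hu1 j)))
  simp only [mul_zero, Finset.sum_const_zero] at h
  exact h

lemma esum_eventually_pos (u c : ι → ℝ) (hu : ∀ j, 0 < u j) {M : ℝ} (hMpos : 0 < M)
    (hM : ∀ j, u j ≤ M) (hMex : ∃ j, u j = M) (hc : ∀ j, u j = M → 0 < c j) :
    ∀ᶠ α in atTop, 0 < esum u c α := by
  classical
  have key : ∀ α, esum u c α = M ^ α * ∑ j, c j * (u j / M) ^ α := by
    intro α
    rw [Finset.mul_sum]
    apply Finset.sum_congr rfl
    intro j _
    rw [Real.div_rpow (hu j).le hMpos.le]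
    have hMα : (0:ℝ) < M ^ α := Real.rpow_pos_of_pos hMpos _
    field_simp
  have hlim : Tendsto (fun α : ℝ => ∑ j, c j * (u j / M) ^ α) atTop
      (𝓝 (∑ j, if u j = M then c j else 0)) := by
    apply tendsto_finset_sum
    intro j _
    by_cases hj : u j = M
    · rw [if_pos hj, hj, div_self (ne_of_gt hMpos)]
      simpa [Real.one_rpow] using tendsto_const_nhds (x := c j) (f := (atTop : Filter ℝ))
    · rw [if_neg hj]
      have hlt : u j / M < 1 := (div_lt_one hMpos).mpr (lt_of_le_of_ne (hM j) hj)
      have hge : (-1:ℝ) < u j / M := by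
        have : (0:ℝ) < u j / M := div_pos (hu j) hMpos
        linarith
      have := Tendsto.const_mul (c j) (tendsto_rpow_atTop_of_base_lt_one (u j / M) hge hlt)
      simpa using this
  have hLpos : 0 < ∑ j, if u j = M then c j else 0 := by
    obtain ⟨j0, hj0⟩ := hMex
    apply Finset.sum_pos'
    · intro j _
      split_ifs with h
      · exact (hc j h).le
      · exact le_rfl
    · exact ⟨j0, Finset.mem_univ j0, by rw [if_pos hj0]; exact hc j0 hj0⟩
  have hev := hlim.eventually (eventually_gt_nhds hLpos)
  filter_upwards [hev] with α hα
  rw [key α]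
  exact mul_pos (Real.rpow_pos_of_pos hMpos α) hα

end CKLM

section M

open Finset Real Filter Topology CKLM

variable {n : ℕ} {p : ℝ}

noncomputable def uu (n : ℕ) (p : ℝ) (f : (Fin n → Bool) → Bool) :
    Sum ((Fin n → Bool) × Bool) Bool → ℝ
  | Sum.inl (x, true) => Tp n p f x
  | Sum.inl (x, false) => 1 - Tp n p f x
  | Sum.inr true => 1 - p
  | Sum.inr false => p

noncomputable def cc (n : ℕ) : Sum ((Fin n → Bool) × Bool) Bool → ℝ
  | Sum.inl _ => 1
  | Sum.inr _ => -(2^n)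

@[simp] lemma uu_inl_t (f : (Fin n → Bool) → Bool) (x : Fin n → Bool) :
    uu n p f (Sum.inl (x, true)) = Tp n p f x := rfl
@[simp] lemma uu_inl_f (f : (Fin n → Bool) → Bool) (x : Fin n → Bool) :
    uu n p f (Sum.inl (x, false)) = 1 - Tp n p f x := rfl
@[simp] lemma uu_inr_t (f : (Fin n → Bool) → Bool) : uu n p f (Sum.inr true) = 1 - p := rfl
@[simp] lemma uu_inr_f (f : (Fin n → Bool) → Bool) : uu n p f (Sum.inr false) = p := rfl
@[simp] lemma cc_inl (a : (Fin n → Bool) × Bool) : cc n (Sum.inl a) = 1 := rfl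
@[simp] lemma cc_inr (b : Bool) : cc n (Sum.inr b) = -(2^n : ℝ) := rfl

lemma uu_pos (hp : 0 < p) (hp2 : p < 1/2) {f : (Fin n → Bool) → Bool} (hf : IsBalanced n f) :
    ∀ j, 0 < uu n p f j := by
  rintro (⟨x, b⟩ | b) <;> cases b
  · simpa using sub_pos.mpr (Tp_lt_one hp hp2 hf x)
  · simpa using Tp_pos hp hp2 hf x
  · show (0:ℝ) < p; exact hp
  · show (0:ℝ) < 1 - p; linarith

lemma uu_lt_one (hp : 0 < p) (hp2 : p < 1/2) {f : (Fin n → Bool) → Bool} (hf : IsBalanced n f) :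
    ∀ j, uu n p f j < 1 := by
  rintro (⟨x, b⟩ | b) <;> cases b
  · have := Tp_pos hp hp2 hf x
    show 1 - Tp n p f x < 1
    linarith
  · exact Tp_lt_one hp hp2 hf x
  · show p < 1; linarith
  · show 1 - p < 1; linarith

lemma g_eq (f : (Fin n → Bool) → Bool) (i : Fin n) (β : ℝ) :
    esum (uu n p f) (cc n) β = Nsym n p f β - Nsym n p (dict n i) β := by
  unfold esum
  rw [Fintype.sum_sum_type, Fintype.sum_prod_type]
  have h1 : ∑ x : Fin n → Bool, ∑ b : Bool,
      cc n (Sum.inl (x, b)) * uu n p f (Sum.inl (x, b)) ^ β = Nsym n p f β := by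
    unfold Nsym
    apply Finset.sum_congr rfl
    intro x _
    rw [Fintype.sum_bool, uu_inl_t, uu_inl_f, cc_inl, cc_inl]
    ring
  have h2 : ∑ b : Bool, cc n (Sum.inr b) * uu n p f (Sum.inr b) ^ β
      = - Nsym n p (dict n i) β := by
    rw [Fintype.sum_bool, uu_inr_t, uu_inr_f, cc_inr, cc_inr, Nsym_dict n p i β]
    ring
  rw [h1, h2]
  ring

lemma Nsym_zero (f : (Fin n → Bool) → Bool) : Nsym n p f 0 = 2^n * 2 := by
  unfold Nsym
  rw [Finset.sum_congr rfl (fun x (_ : x ∈ Finset.univ) => by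
    rw [Real.rpow_zero, Real.rpow_zero])]
  rw [Finset.sum_const, Finset.card_univ, card_cube]
  simp only [nsmul_eq_mul, Nat.cast_pow, Nat.cast_ofNat]
  norm_num

lemma Nsym_one (f : (Fin n → Bool) → Bool) : Nsym n p f 1 = 2^n := by
  unfold Nsym
  rw [Finset.sum_congr rfl (fun x (_ : x ∈ Finset.univ) =>
    show Tp n p f x ^ (1:ℝ) + (1 - Tp n p f x) ^ (1:ℝ) = 1 by
      rw [Real.rpow_one, Real.rpow_one]; ring)]
  rw [Finset.sum_const, Finset.card_univ, card_cube]
  simp only [nsmul_eq_mul, Nat.cast_pow, Nat.cast_ofNat]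
  norm_num

lemma g_zero (f : (Fin n → Bool) → Bool) (i : Fin n) :
    esum (uu n p f) (cc n) 0 = 0 := by
  rw [g_eq f i, Nsym_zero, Nsym_zero]
  ring

lemma g_one (f : (Fin n → Bool) → Bool) (i : Fin n) :
    esum (uu n p f) (cc n) 1 = 0 := by
  rw [g_eq f i, Nsym_one, Nsym_one]
  ring

lemma rpow_two_eq (s : ℝ) : s ^ (2:ℝ) = s ^ (2:ℕ) := by
  rw [show (2:ℝ) = ((2:ℕ):ℝ) by norm_num, Real.rpow_natCast]

lemma Nsym_two {f : (Fin n → Bool) → Bool} (hf : IsBalanced n f) :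
    Nsym n p f 2 = 2 * ∑ x : Fin n → Bool, (Tp n p f x)^2 := by
  unfold Nsym
  have e : ∀ x : Fin n → Bool, Tp n p f x ^ (2:ℝ) + (1 - Tp n p f x) ^ (2:ℝ)
      = 2*(Tp n p f x)^2 + 1 - 2*Tp n p f x := by
    intro x
    rw [rpow_two_eq, rpow_two_eq]
    ring
  rw [Finset.sum_congr rfl (fun x (_ : x ∈ Finset.univ) => e x)]
  have e2 : ∑ x : Fin n → Bool, (2*(Tp n p f x)^2 + 1 - 2*Tp n p f x)
      = 2*(∑ x : Fin n → Bool, (Tp n p f x)^2) + 2^n - 2*(2^n/2) := by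
    rw [Finset.sum_sub_distrib, Finset.sum_add_distrib, ← Finset.mul_sum, ← Finset.mul_sum,
      sum_Tp hf, Finset.sum_const, Finset.card_univ, card_cube]
    simp only [nsmul_eq_mul, Nat.cast_pow, Nat.cast_ofNat, mul_one]
  rw [e2]
  ring

lemma g_two_neg (hp : 0 < p) (hp2 : p < 1/2) {f : (Fin n → Bool) → Bool} (hf : IsBalanced n f)
    (i : Fin n) (hnd : ¬ ∀ x, Tp n p f x = p ∨ Tp n p f x = 1 - p) :
    esum (uu n p f) (cc n) 2 < 0 := by
  obtain ⟨hle, heqc⟩ := quad_bound hp hp2 hf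
  have hlt : ∑ x : Fin n → Bool, (Tp n p f x)^2 < 2^n * (1/4 + (1-2*p)^2/4) :=
    lt_of_le_of_ne hle (fun h => hnd (heqc h))
  rw [g_eq f i, Nsym_two hf, Nsym_dict n p i]
  rw [rpow_two_eq, rpow_two_eq]
  nlinarith [hlt]

lemma hbin_eq (s : ℝ) :
    Real.log s * s + Real.log (1 - s) * (1 - s) = -(Real.log 2) * binEnt s := by
  unfold binEnt Real.logb
  have h2 : Real.log 2 ≠ 0 := ne_of_gt (Real.log_pos one_lt_two)
  field_simp
  ring

lemma G1_one (hp : 0 < p) (hp2 : p < 1/2) {f : (Fin n → Bool) → Bool} (hf : IsBalanced n f)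
    (hMI : MI n p f ≤ 1 - binEnt p) :
    esum (uu n p f) (fun j => cc n j * Real.log (uu n p f j)) 1 ≤ 0 := by
  have h2pos : (0:ℝ) < Real.log 2 := Real.log_pos one_lt_two
  have h2n : (0:ℝ) < 2^n := by positivity
  have hsum : 2^n * binEnt p ≤ ∑ x : Fin n → Bool, binEnt (Tp n p f x) := by
    unfold MI at hMI
    have h' : binEnt p ≤ ((2:ℝ)^n)⁻¹ * ∑ x : Fin n → Bool, binEnt (Tp n p f x) := by linarith
    calc (2:ℝ)^n * binEnt p
        ≤ 2^n * (((2:ℝ)^n)⁻¹ * ∑ x : Fin n → Bool, binEnt (Tp n p f x)) :=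
          mul_le_mul_of_nonneg_left h' h2n.le
      _ = ∑ x : Fin n → Bool, binEnt (Tp n p f x) := by
          rw [← mul_assoc, mul_inv_cancel₀ (ne_of_gt h2n), one_mul]
  have hval : esum (uu n p f) (fun j => cc n j * Real.log (uu n p f j)) 1
      = (∑ x : Fin n → Bool, (Real.log (Tp n p f x) * Tp n p f x
          + Real.log (1 - Tp n p f x) * (1 - Tp n p f x)))
        + (-(2^n)) * (Real.log (1-p) * (1-p) + Real.log p * p) := by
    unfold esum
    rw [Fintype.sum_sum_type, Fintype.sum_prod_type]
    have hl : ∀ x : Fin n → Bool, ∑ b : Bool,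
        (cc n (Sum.inl (x, b)) * Real.log (uu n p f (Sum.inl (x, b))))
          * uu n p f (Sum.inl (x, b)) ^ (1:ℝ)
        = Real.log (Tp n p f x) * Tp n p f x
          + Real.log (1 - Tp n p f x) * (1 - Tp n p f x) := by
      intro x
      rw [Fintype.sum_bool, uu_inl_t, uu_inl_f, cc_inl, cc_inl, Real.rpow_one, Real.rpow_one]
      ring
    have hr : ∑ b : Bool,
        (cc n (Sum.inr b) * Real.log (uu n p f (Sum.inr b))) * uu n p f (Sum.inr b) ^ (1:ℝ)
        = (-(2^n)) * (Real.log (1-p) * (1-p) + Real.log p * p) := by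
      rw [Fintype.sum_bool, uu_inr_t, uu_inr_f, cc_inr, cc_inr, Real.rpow_one, Real.rpow_one]
      ring
    rw [Finset.sum_congr rfl (fun x (_ : x ∈ Finset.univ) => hl x), hr]
  rw [hval]
  rw [Finset.sum_congr rfl (fun x (_ : x ∈ Finset.univ) => hbin_eq (Tp n p f x))]
  rw [← Finset.mul_sum]
  have hbp : Real.log (1-p) * (1-p) + Real.log p * p = -(Real.log 2) * binEnt p := by
    rw [← hbin_eq p]
    ring
  rw [hbp]
  have hkey : 0 ≤ Real.log 2 * ((∑ x : Fin n → Bool, binEnt (Tp n p f x)) - 2^n * binEnt p) :=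
    mul_nonneg h2pos.le (by linarith)
  nlinarith [hkey]

lemma Nsym_deg {f : (Fin n → Bool) → Bool}
    (hdeg : ∀ x, Tp n p f x = p ∨ Tp n p f x = 1 - p) (i : Fin n) (β : ℝ) :
    Nsym n p f β = Nsym n p (dict n i) β := by
  rw [Nsym_dict n p i β]
  unfold Nsym
  rw [Finset.sum_congr rfl (fun x (_ : x ∈ Finset.univ) =>
    show Tp n p f x ^ β + (1 - Tp n p f x) ^ β = (1-p) ^ β + p ^ β by
      rcases hdeg x with h | h
      · rw [h, show (1:ℝ) - p = 1 - p from rfl]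
        exact add_comm _ _
      · rw [h, show (1:ℝ) - (1 - p) = p by ring])]
  rw [Finset.sum_const, Finset.card_univ, card_cube]
  simp only [nsmul_eq_mul, Nat.cast_pow, Nat.cast_ofNat]

end M


open Finset Real Filter Topology CKLM in
/-- If the Courtade–Kumar conjecture holds for all balanced functions on the `n`-cube at
noise level `p`, then the symmetrized Li–Médard conjecture holds at that level. -/
theorem CK_implies_sym_li_medard (n : ℕ) (p : ℝ) (hp : 0 < p) (hp2 : p < 1/2)
    (hCK : ∀ f : (Fin n → Bool) → Bool, IsBalanced n f → MI n p f ≤ 1 - binEnt p) :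
    ∀ f : (Fin n → Bool) → Bool, IsBalanced n f → ∀ i : Fin n,
      ∀ α ∈ Set.Icc (1 : ℝ) 2, Nsym n p f α ≤ Nsym n p (dict n i) α := by
  intro f hf i α hα
  obtain ⟨hα1, hα2⟩ := hα
  by_cases hdeg : ∀ x, Tp n p f x = p ∨ Tp n p f x = 1 - p
  · exact le_of_eq (Nsym_deg hdeg i α)
  by_contra hcon
  push_neg at hcon
  set u : Sum ((Fin n → Bool) × Bool) Bool → ℝ := uu n p f with hudef
  set c : Sum ((Fin n → Bool) × Bool) Bool → ℝ := cc n with hcdef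
  have hq : (0:ℝ) < 1 - p := by linarith
  have hpq : p < 1 - p := by linarith
  have hu : ∀ j, 0 < u j := uu_pos hp hp2 hf
  have hu1 : ∀ j, u j < 1 := uu_lt_one hp hp2 hf
  have hgα : 0 < esum u c α := by
    rw [hudef, hcdef, g_eq f i α]
    linarith
  have hg0 : esum u c 0 = 0 := g_zero f i
  have hg1 : esum u c 1 = 0 := g_one f i
  have hg2 : esum u c 2 < 0 := g_two_neg hp hp2 hf i hdeg
  have hcontg : Continuous (esum u c) := esum_continuous u c hu
  have hα1' : (1:ℝ) < α := by
    rcases lt_or_eq_of_le hα1 with h | h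
    · exact h
    · exfalso; rw [← h] at hgα; linarith
  have hα2' : α < 2 := by
    rcases lt_or_eq_of_le hα2 with h | h
    · exact h
    · exfalso; rw [h] at hgα; linarith
  -- a zero ζ2 ∈ (α, 2)
  obtain ⟨ζ2, hζ2mem, hζ2z⟩ :=
    intermediate_value_Ioo' (le_of_lt hα2') hcontg.continuousOn
      (show (0:ℝ) ∈ Set.Ioo (esum u c 2) (esum u c α) from ⟨hg2, hgα⟩)
  have h1ζ2 : (1:ℝ) < ζ2 := lt_trans hα1' hζ2mem.1
  by_cases hAB : ∀ x, p ≤ Tp n p f x ∧ Tp n p f x ≤ 1 - p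
  · -- Case A : all values in [p, 1-p], use the 3-zero master lemma
    have hlow : ∀ j, p ≤ u j := by
      rintro (⟨x, b⟩ | b) <;> cases b
      · show p ≤ 1 - Tp n p f x
        linarith [(hAB x).2]
      · exact (hAB x).1
      · show p ≤ p
        exact le_refl p
      · show p ≤ 1 - p
        linarith
    have hhigh : ∀ j, u j ≤ 1 - p := by
      rintro (⟨x, b⟩ | b) <;> cases b
      · show 1 - Tp n p f x ≤ 1 - p
        linarith [(hAB x).1]
      · exact (hAB x).2
      · show p ≤ 1 - p
        linarith
      · show (1:ℝ) - p ≤ 1 - p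
        exact le_refl _
    have hsign : ∀ j, u j ≠ p → u j ≠ 1 - p → 0 ≤ c j := by
      rintro (⟨x, b⟩ | b) h1 h2
      · show (0:ℝ) ≤ 1
        norm_num
      · cases b
        · exact absurd rfl h1
        · exact absurd rfl h2
    have hz := esum_master_A u c hu hp hq hpq hlow hhigh hsign
      (show (0:ℝ) < 1 by norm_num) h1ζ2 hg0 hg1 hζ2z
    have := hz α
    linarith
  · -- Case B : some value outside [p, 1-p]
    have hjstar : ∃ j, 1 - p < u j := by
      obtain ⟨x0, hx0⟩ := not_forall.mp hAB
      rcases not_and_or.mp hx0 with h | h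
      · refine ⟨Sum.inl (x0, false), ?_⟩
        show 1 - p < 1 - Tp n p f x0
        have := not_le.mp h
        linarith
      · exact ⟨Sum.inl (x0, true), not_le.mp h⟩
    obtain ⟨jstar, hjstar'⟩ := hjstar
    have hne : (Finset.univ : Finset (Sum ((Fin n → Bool) × Bool) Bool)).Nonempty :=
      ⟨jstar, Finset.mem_univ _⟩
    set M := Finset.univ.sup' hne u with hMdef
    have hMle : ∀ j, u j ≤ M := fun j => Finset.le_sup' u (Finset.mem_univ j)
    obtain ⟨j0, _, hj0⟩ := Finset.exists_mem_eq_sup' hne u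
    have hMgt : 1 - p < M := lt_of_lt_of_le hjstar' (hMle jstar)
    have hMpos : 0 < M := by linarith
    have hcM : ∀ j, u j = M → 0 < c j := by
      rintro (⟨x, b⟩ | b) hj
      · show (0:ℝ) < 1
        norm_num
      · exfalso
        cases b
        · have : u (Sum.inr false) = p := rfl
          rw [this] at hj
          linarith
        · have : u (Sum.inr true) = 1 - p := rfl
          rw [this] at hj
          linarith
    have hev := esum_eventually_pos u c hu hMpos hMle ⟨j0, hj0.symm⟩ hcM
    obtain ⟨A0, hA0pos, hA0gt⟩ := (hev.and (eventually_gt_atTop 2)).exists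
    obtain ⟨ζ3, hζ3mem, hζ3z⟩ :=
      intermediate_value_Ioo (le_of_lt hA0gt) hcontg.continuousOn
        (show (0:ℝ) ∈ Set.Ioo (esum u c 2) (esum u c A0) from ⟨hg2, hA0pos⟩)
    have hζ2ζ3 : ζ2 < ζ3 := lt_trans hζ2mem.2 hζ3mem.1
    set G1 : ℝ → ℝ := esum u (fun j => c j * Real.log (u j)) with hG1def
    have hDer : ∀ β, HasDerivAt (esum u c) (G1 β) β := fun β => esum_hasDerivAt u c hu β
    have hG1le : G1 1 ≤ 0 := G1_one hp hp2 hf (hCK f hf)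
    have hsignB : ∀ j, u j ≠ p → u j ≠ 1 - p → 0 ≤ c j := by
      rintro (⟨x, b⟩ | b) h1 h2
      · show (0:ℝ) ≤ 1
        norm_num
      · cases b
        · exact absurd rfl h1
        · exact absurd rfl h2
    rcases lt_or_eq_of_le hG1le with hG1lt | hG1eq
    · -- derivative at 1 is negative : a fifth zero ζ1 ∈ (1, α)
      have hslope := hasDerivAt_iff_tendsto_slope.mp (hDer 1)
      have hevs : ∀ᶠ β in 𝓝[≠] (1:ℝ), slope (esum u c) 1 β < 0 :=
        hslope.eventually (eventually_lt_nhds hG1lt)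
      have hsub : 𝓝[>] (1:ℝ) ≤ 𝓝[≠] (1:ℝ) :=
        nhdsWithin_mono 1 (fun x hx => ne_of_gt hx)
      have hevs' : ∀ᶠ β in 𝓝[>] (1:ℝ), slope (esum u c) 1 β < 0 := hevs.filter_mono hsub
      have hmem : Set.Ioo (1:ℝ) α ∈ 𝓝[>] (1:ℝ) :=
        Ioo_mem_nhdsGT_of_mem ⟨le_refl 1, hα1'⟩
      obtain ⟨β, hβslope, hβmem⟩ :=
        (hevs'.and (Filter.eventually_of_mem hmem (fun x hx => hx))).exists
      have hβ1 : 0 < β - 1 := by linarith [hβmem.1]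
      have hβneg : esum u c β < 0 := by
        rw [slope_def_field, hg1, sub_zero] at hβslope
        by_contra hge
        push_neg at hge
        exact absurd hβslope (not_lt.mpr (div_nonneg hge hβ1.le))
      obtain ⟨ζ1, hζ1mem, hζ1z⟩ :=
        intermediate_value_Ioo (le_of_lt hβmem.2) hcontg.continuousOn
          (show (0:ℝ) ∈ Set.Ioo (esum u c β) (esum u c α) from ⟨hβneg, hgα⟩)
      have hz := esum_master_B u c hu hp hq (ne_of_lt hpq) hsignB
        (show (0:ℝ) < 1 by norm_num)
        (show (1:ℝ) < ζ1 from lt_trans hβmem.1 hζ1mem.1)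
        (show ζ1 < ζ2 from lt_trans hζ1mem.2 hζ2mem.1)
        hζ2ζ3 hg0 hg1 hζ1z hζ2z hζ3z
      have := hz α
      linarith
    · -- derivative at 1 vanishes : five zeros of the derivative
      obtain ⟨ξ1, hξ1mem, hξ1z⟩ := exists_hasDerivAt_eq_zero (show (0:ℝ) < 1 by norm_num)
        hcontg.continuousOn (hg0.trans hg1.symm) (fun x _ => hDer x)
      obtain ⟨ξ2, hξ2mem, hξ2z⟩ := exists_hasDerivAt_eq_zero h1ζ2
        hcontg.continuousOn (hg1.trans hζ2z.symm) (fun x _ => hDer x)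
      obtain ⟨ξ3, hξ3mem, hξ3z⟩ := exists_hasDerivAt_eq_zero hζ2ζ3
        hcontg.continuousOn (hζ2z.trans hζ3z.symm) (fun x _ => hDer x)
      -- a zero of the derivative beyond ζ3, via a local max
      obtain ⟨A1, hA1pos, hA1gt⟩ := (hev.and (eventually_gt_atTop ζ3)).exists
      have htend := esum_tendsto_zero u c hu hu1
      obtain ⟨C, hC1, hC2⟩ :=
        ((htend.eventually (eventually_lt_nhds hA1pos)).and (eventually_gt_atTop A1)).exists
      have hζ3C : ζ3 ≤ C := by linarith
      obtain ⟨m, hmmem, hmax⟩ := isCompact_Icc.exists_isMaxOn (Set.nonempty_Icc.mpr hζ3C)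
        hcontg.continuousOn
      have hA1mem : A1 ∈ Set.Icc ζ3 C := ⟨le_of_lt hA1gt, le_of_lt hC2⟩
      have hgm : esum u c A1 ≤ esum u c m := hmax hA1mem
      have hmne1 : m ≠ ζ3 := by
        intro h
        rw [h, hζ3z] at hgm
        linarith
      have hmne2 : m ≠ C := by
        intro h
        rw [h] at hgm
        linarith
      have hmIoo : m ∈ Set.Ioo ζ3 C :=
        ⟨lt_of_le_of_ne hmmem.1 (Ne.symm hmne1), lt_of_le_of_ne hmmem.2 hmne2⟩
      have hloc : IsLocalMax (esum u c) m := hmax.isLocalMax (Icc_mem_nhds hmIoo.1 hmIoo.2)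
      have hξ4z : G1 m = 0 := hloc.hasDerivAt_eq_zero (hDer m)
      -- apply the master lemma to the negated derivative coefficients
      set c' : Sum ((Fin n → Bool) × Bool) Bool → ℝ :=
        fun j => -(c j * Real.log (u j)) with hc'def
      have hnegrel : ∀ β, esum u c' β = - G1 β := by
        intro β
        rw [hG1def]
        unfold esum
        rw [← Finset.sum_neg_distrib]
        apply Finset.sum_congr rfl
        intro j _
        show -(c j * Real.log (u j)) * u j ^ β = -(c j * Real.log (u j) * u j ^ β)
        ring
      have hsignB' : ∀ j, u j ≠ p → u j ≠ 1 - p → 0 ≤ c' j := by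
        rintro (⟨x, b⟩ | b) h1 h2
        · have hl := Real.log_nonpos (hu (Sum.inl (x, b))).le (hu1 (Sum.inl (x, b))).le
          show 0 ≤ -((1:ℝ) * Real.log (u (Sum.inl (x, b))))
          linarith
        · cases b
          · exact absurd rfl h1
          · exact absurd rfl h2
      have hzB := esum_master_B u c' hu hp hq (ne_of_lt hpq) hsignB'
        hξ1mem.2 hξ2mem.1
        (show ξ2 < ξ3 from lt_trans hξ2mem.2 hξ3mem.1)
        (show ξ3 < m from lt_trans hξ3mem.2 hmIoo.1)
        (by rw [hnegrel, hξ1z, neg_zero])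
        (by rw [hnegrel, hG1eq, neg_zero])
        (by rw [hnegrel, hξ2z, neg_zero])
        (by rw [hnegrel, hξ3z, neg_zero])
        (by rw [hnegrel, hξ4z, neg_zero])
      -- so the derivative vanishes identically; MVT gives esum u c α = 0
      obtain ⟨m2, hm2mem, hm2⟩ := exists_hasDerivAt_eq_slope (esum u c) G1 hα1'
        hcontg.continuousOn (fun x _ => hDer x)
      have hG1m2 : G1 m2 = 0 := by
        have := hzB m2
        rw [hnegrel] at this
        linarith
      rw [hG1m2, hg1, sub_zero] at hm2
      have hα1ne : α - 1 ≠ 0 := by linarith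
      have : esum u c α = 0 := by
        field_simp at hm2
        linarith
      linarith
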